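/- Let I ⊆ {0,1,…,n−1} and let Y_I = {w ∈ B_n : Des(w) = I} be the descent class of I. (1) If I = {0 < p_1 < p_2 < ⋯ < p_k}, then the largest element of Y_I in the weak order is ζ_I = (−p_1,…,−1, −p_2,…,−(p_1+1), …, −n,…,−(n−p_k)). (2) If I = {p_1 < p_2 < ⋯ < p_k} with p_1 > 0, then the largest element of Y_I in the weak order is ζ_I = (1,…,p_1, −p_2,…,−(p_1+1), …, −n,…,−(n−p_k)). -/

import Mathlib

open Finset

open scoped Classical

/-- The hyperoctahedral group `𝔅ₙ`, realized as the set of those permutations `w` of `ℤ`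
that satisfy `w (-i) = - w i` for all `i` and fix every integer of absolute value `> n`.
One-line notation: `w₁ ⋯ w_n` with `w_i = w i` for `1 ≤ i ≤ n`. -/
def SignedPerm (n : ℕ) : Set (Equiv.Perm ℤ) :=
  {w | (∀ i : ℤ, w (-i) = - w i) ∧ (∀ i : ℤ, (n : ℤ) < |i| → w i = i)}

/-- The inversion set `Inv(w) = {(i,j) : 1 ≤ i < j ≤ n, w_i > w_j}`. -/
noncomputable def InvSet (n : ℕ) (w : Equiv.Perm ℤ) : Finset (ℤ × ℤ) :=
  ((Finset.Icc (1 : ℤ) (n : ℤ)) ×ˢ (Finset.Icc (1 : ℤ) (n : ℤ))).filter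
    fun p => p.1 < p.2 ∧ w p.2 < w p.1

/-- The set of negative indices `Nega(w) = {i ∈ [n] : w_i < 0}`. -/
noncomputable def NegaSet (n : ℕ) (w : Equiv.Perm ℤ) : Finset ℤ :=
  (Finset.Icc (1 : ℤ) (n : ℤ)).filter fun i => w i < 0

/-- The negative sum pair set `Nsp(w) = {(i,j) : 1 ≤ i < j ≤ n, w_i + w_j < 0}`. -/
noncomputable def NspSet (n : ℕ) (w : Equiv.Perm ℤ) : Finset (ℤ × ℤ) :=
  ((Finset.Icc (1 : ℤ) (n : ℤ)) ×ˢ (Finset.Icc (1 : ℤ) (n : ℤ))).filter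
    fun p => p.1 < p.2 ∧ w p.1 + w p.2 < 0

/-- The Coxeter length of `w ∈ 𝔅ₙ`: `ℓ(w) = #Inv(w) + #Nega(w) + #Nsp(w)`. -/
noncomputable def blen (n : ℕ) (w : Equiv.Perm ℤ) : ℕ :=
  (InvSet n w).card + (NegaSet n w).card + (NspSet n w).card

/-- The left weak order on `𝔅ₙ`: `u ≤ v` iff `ℓ(v) = ℓ(u) + ℓ(v * u⁻¹)`. -/
def wle (n : ℕ) (u v : Equiv.Perm ℤ) : Prop :=
  blen n v = blen n u + blen n (v * u⁻¹)

/-- The Coxeter generators of `𝔅ₙ`: `s₀ = (1,-1)` and `sᵢ = (i,i+1)(-i,-(i+1))` for `i ≥ 1`. -/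
def sB (i : ℕ) : Equiv.Perm ℤ :=
  if i = 0 then Equiv.swap 1 (-1)
  else Equiv.swap (i : ℤ) ((i : ℤ) + 1) * Equiv.swap (-(i : ℤ)) (-((i : ℤ) + 1))

/-- `a[p] = a + p` if `a > 0`, `a - p` if `a < 0` (and `0 ↦ 0`). -/
def shiftFun (p : ℕ) (b : ℤ) : ℤ :=
  if 0 < b then b + (p : ℤ) else if b < 0 then b - (p : ℤ) else 0

/-- `w` is the shifted product `u × v ∈ 𝔅_{p+q}` of `u ∈ 𝔅_p` and `v ∈ 𝔅_q`:
its one-line notation is `(u₁, …, u_p, v₁[p], …, v_q[p])`. -/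
def IsSProd (p q : ℕ) (u v w : Equiv.Perm ℤ) : Prop :=
  w ∈ SignedPerm (p + q) ∧
  (∀ a : ℤ, 1 ≤ a → a ≤ (p : ℤ) → w a = u a) ∧
  (∀ a : ℤ, (p : ℤ) < a → a ≤ (p : ℤ) + (q : ℤ) → w a = shiftFun p (v (a - (p : ℤ))))

/-- `ξ` is a `(p,q)`-shuffle: an element of `𝔅_{p+q}` with positive entries (a permutation)
that is increasing on each of the blocks `[1,p]` and `[p+1,p+q]`. -/
def IsShuffle (p q : ℕ) (ξ : Equiv.Perm ℤ) : Prop :=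
  ξ ∈ SignedPerm (p + q) ∧
  (∀ a : ℤ, 1 ≤ a → a ≤ (p : ℤ) + (q : ℤ) → 0 < ξ a) ∧
  (∀ a b : ℤ, 1 ≤ a → a < b → b ≤ (p : ℤ) → ξ a < ξ b) ∧
  (∀ a b : ℤ, (p : ℤ) < a → a < b → b ≤ (p : ℤ) + (q : ℤ) → ξ a < ξ b)

/-- `w` is the standard signed permutation `sts(a₁ ⋯ a_m)` of the word `a₁ ⋯ a_m = a 1, …, a m`
(of nonzero integers): the unique `w ∈ 𝔅_m` with the same negative index set and
`|w_i| < |w_j| ↔ |a_i| ≤ |a_j|` for `1 ≤ i < j ≤ m`. -/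
def IsSts (m : ℕ) (a : ℤ → ℤ) (w : Equiv.Perm ℤ) : Prop :=
  w ∈ SignedPerm m ∧
  (∀ i : ℤ, 1 ≤ i → i ≤ (m : ℤ) → (w i < 0 ↔ a i < 0)) ∧
  (∀ i j : ℤ, 1 ≤ i → i < j → j ≤ (m : ℤ) → (|w i| < |w j| ↔ |a i| ≤ |a j|))

/-- The standard signed permutation of a word, as a function. -/
noncomputable def sts (m : ℕ) (a : ℤ → ℤ) : Equiv.Perm ℤ :=
  if h : ∃ w, IsSts m a w then h.choose else 1

/-- Descent set of `w ∈ 𝔅ₙ`: `Des(w) = {i ∈ [0,n-1] : w_i > w_{i+1}}` with `w₀ = 0`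
(note `w 0 = 0` holds automatically). -/
def DesSet (n : ℕ) (w : Equiv.Perm ℤ) : Finset ℕ :=
  (Finset.range n).filter fun i => w ((i : ℤ) + 1) < w (i : ℤ)

/-- Global descent set of `u ∈ 𝔅ₙ`. -/
noncomputable def GDesSet (n : ℕ) (u : Equiv.Perm ℤ) : Finset ℕ :=
  (Finset.Ico 1 n).filter fun i =>
    ∀ j k : ℤ, 1 ≤ j → j ≤ (i : ℤ) → (i : ℤ) < k → k ≤ (n : ℤ) → u k < u j

/-- `m` is the meet (greatest lower bound) of `x` and `y` within `S`, w.r.t. the weak order. -/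
def IsMeetIn (n : ℕ) (S : Set (Equiv.Perm ℤ)) (x y m : Equiv.Perm ℤ) : Prop :=
  m ∈ S ∧ wle n m x ∧ wle n m y ∧ ∀ z ∈ S, wle n z x → wle n z y → wle n z m

/-- `j` is the join (least upper bound) of `x` and `y` within `S`, w.r.t. the weak order. -/
def IsJoinIn (n : ℕ) (S : Set (Equiv.Perm ℤ)) (x y j : Equiv.Perm ℤ) : Prop :=
  j ∈ S ∧ wle n x j ∧ wle n y j ∧ ∀ z ∈ S, wle n x z → wle n y z → wle n j z

/-- The set `𝔅_p × 𝔅_{q,K} ⊆ 𝔅_{p+q}` of shifted products `u × v` with `u ∈ 𝔅_p`,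
`v ∈ 𝔅_q`, `Nega(v) = K`. -/
def SProdComp (p q : ℕ) (K : Finset ℤ) : Set (Equiv.Perm ℤ) :=
  {w | ∃ u v : Equiv.Perm ℤ, u ∈ SignedPerm p ∧ v ∈ SignedPerm q ∧ NegaSet q v = K ∧
        IsSProd p q u v w}

/-- `w` is the iterated shifted product `u⁽¹⁾ × ⋯ × u⁽ᵏ⁾` of the list `us` of signed
permutations with block sizes given by the list `ps`. -/
def IsMultiSProd (ps : List ℕ) (us : List (Equiv.Perm ℤ)) (w : Equiv.Perm ℤ) : Prop :=
  w ∈ SignedPerm ps.sum ∧ us.length = ps.length ∧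
  ∀ i < ps.length,
    us.getD i 1 ∈ SignedPerm (ps.getD i 0) ∧
    ∀ a : ℤ, ((ps.take i).sum : ℤ) < a → a ≤ ((ps.take i).sum : ℤ) + (ps.getD i 0 : ℤ) →
      w a = shiftFun ((ps.take i).sum) ((us.getD i 1) (a - ((ps.take i).sum : ℤ)))

/-- The subset `𝔅_{p₁} × 𝔅_{p₂} × ⋯ × 𝔅_{p_k}` of `𝔅_{p₁+⋯+p_k}`. -/
def MultiProdSet (ps : List ℕ) : Set (Equiv.Perm ℤ) :=
  {w | ∃ us, IsMultiSProd ps us w}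

/-- The `(L₂,…,L_k)`-component `𝔅_{p₁} × 𝔅_{p₂,L₂} × ⋯ × 𝔅_{p_k,L_k}`, where
`Ls.getD (i-1) ∅` is the prescribed negative index set of the `(i+1)`-st factor. -/
def ComponentSet (ps : List ℕ) (Ls : List (Finset ℤ)) : Set (Equiv.Perm ℤ) :=
  {w | ∃ us, IsMultiSProd ps us w ∧
        ∀ i, 1 ≤ i → i < ps.length →
          NegaSet (ps.getD i 0) (us.getD i 1) = Ls.getD (i - 1) ∅}

/-- `ξ ∈ Sh(p₁,…,p_k)`: a permutation in `𝔅_{p₁+⋯+p_k}` (all entries positive)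
increasing on each consecutive block. -/
def IsMultiShuffle (ps : List ℕ) (ξ : Equiv.Perm ℤ) : Prop :=
  ξ ∈ SignedPerm ps.sum ∧
  (∀ a : ℤ, 1 ≤ a → a ≤ (ps.sum : ℤ) → 0 < ξ a) ∧
  ∀ i < ps.length, ∀ a b : ℤ,
    ((ps.take i).sum : ℤ) < a → a < b → b ≤ ((ps.take i).sum : ℤ) + (ps.getD i 0 : ℤ) →
      ξ a < ξ b
namespace DCG

lemma sp_neg {n : ℕ} {w : Equiv.Perm ℤ} (hw : w ∈ SignedPerm n) (i : ℤ) :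
    w (-i) = - w i := hw.1 i

lemma sp_zero {n : ℕ} {w : Equiv.Perm ℤ} (hw : w ∈ SignedPerm n) : w 0 = 0 := by
  have h := hw.1 0
  rw [neg_zero] at h
  omega

lemma sp_ne_zero {n : ℕ} {w : Equiv.Perm ℤ} (hw : w ∈ SignedPerm n) {a : ℤ} (ha : a ≠ 0) :
    w a ≠ 0 := by
  intro h
  exact ha (w.injective (h.trans (sp_zero hw).symm))

lemma sp_abs_le {n : ℕ} {w : Equiv.Perm ℤ} (hw : w ∈ SignedPerm n) {a : ℤ}
    (ha : |a| ≤ (n : ℤ)) : |w a| ≤ (n : ℤ) := by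
  by_contra h
  push_neg at h
  have h2 : w (w a) = w a := hw.2 _ h
  have h3 := w.injective h2
  rw [h3] at h
  omega

lemma sp_inv {n : ℕ} {w : Equiv.Perm ℤ} (hw : w ∈ SignedPerm n) : w⁻¹ ∈ SignedPerm n := by
  constructor
  · intro i
    apply w.injective
    rw [(show ∀ x : ℤ, w (w⁻¹ x) = x from fun x => (Equiv.eq_symm_apply w).mp rfl), hw.1, (show ∀ x : ℤ, w (w⁻¹ x) = x from fun x => (Equiv.eq_symm_apply w).mp rfl)]
  · intro i hi
    apply w.injective
    rw [(show ∀ x : ℤ, w (w⁻¹ x) = x from fun x => (Equiv.eq_symm_apply w).mp rfl), hw.2 i hi]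

lemma sp_mul {n : ℕ} {u v : Equiv.Perm ℤ} (hu : u ∈ SignedPerm n) (hv : v ∈ SignedPerm n) :
    u * v ∈ SignedPerm n := by
  constructor
  · intro i
    simp only [Equiv.Perm.mul_apply, hv.1, hu.1]
  · intro i hi
    simp only [Equiv.Perm.mul_apply, hv.2 i hi, hu.2 i hi]

/-- Positive roots of `Bₙ`, encoded as pairs `(i,j)` with `-j ≤ i < j`, `i ≠ 0`, `j ≤ n`,
representing `e_j - e_i` (with `e_{-k} = -e_k`). -/
noncomputable def bP (n : ℕ) : Finset (ℤ × ℤ) :=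
  ((Finset.Icc (-(n:ℤ)) (n:ℤ)) ×ˢ (Finset.Icc (-(n:ℤ)) (n:ℤ))).filter
    fun p => p.1 < p.2 ∧ 0 ≤ p.1 + p.2 ∧ p.1 ≠ 0

lemma mem_bP {n : ℕ} {p : ℤ × ℤ} :
    p ∈ bP n ↔ -(n:ℤ) ≤ p.1 ∧ p.1 < p.2 ∧ p.2 ≤ (n:ℤ) ∧ 0 ≤ p.1 + p.2 ∧ p.1 ≠ 0 := by
  simp only [bP, Finset.mem_filter, Finset.mem_product, Finset.mem_Icc]
  omega

/-- The set of positive roots sent to negative roots by `w`. -/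
noncomputable def bN (n : ℕ) (w : Equiv.Perm ℤ) : Finset (ℤ × ℤ) :=
  (bP n).filter fun p => w p.2 < w p.1

lemma mem_bN {n : ℕ} {w : Equiv.Perm ℤ} {p : ℤ × ℤ} :
    p ∈ bN n w ↔ p ∈ bP n ∧ w p.2 < w p.1 := Finset.mem_filter

/-- Canonical positive representative of the root `e_{p.2} - e_{p.1}`. -/
def posrep (p : ℤ × ℤ) : ℤ × ℤ :=
  if 0 ≤ p.1 + p.2 then (min p.1 p.2, max p.1 p.2) else (-(max p.1 p.2), -(min p.1 p.2))

/-- Action of `u` on roots. -/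
def ract (u : Equiv.Perm ℤ) (p : ℤ × ℤ) : ℤ × ℤ := posrep (u p.1, u p.2)

lemma posrep_swap (a b : ℤ) : posrep (b, a) = posrep (a, b) := by
  simp only [posrep, min_comm, max_comm, add_comm]

lemma posrep_neg (a b : ℤ) : posrep (-a, -b) = posrep (a, b) := by
  simp only [posrep]
  split <;> split <;> (apply Prod.ext <;> simp <;> omega)

lemma posrep_eq_self {a b : ℤ} (hab : a < b) (hs : 0 ≤ a + b) : posrep (a, b) = (a, b) := by
  simp only [posrep, if_pos hs]
  rw [min_eq_left hab.le, max_eq_right hab.le]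

end DCG
namespace DCG

lemma posrep_mem {n : ℕ} {a b : ℤ} (ha : |a| ≤ (n:ℤ)) (hb : |b| ≤ (n:ℤ)) (hne : a ≠ b)
    (ha0 : a ≠ 0) (hb0 : b ≠ 0) : posrep (a, b) ∈ bP n := by
  rw [abs_le] at ha hb
  rw [mem_bP]
  simp only [posrep]
  rcases le_total a b with h | h
  · rw [min_eq_left h, max_eq_right h]
    split <;> simp only [] <;> omega
  · rw [min_eq_right h, max_eq_left h]
    split <;> simp only [] <;> omega

lemma ract_mem {n : ℕ} {u : Equiv.Perm ℤ} (hu : u ∈ SignedPerm n) {p : ℤ × ℤ}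
    (hp : p ∈ bP n) : ract u p ∈ bP n := by
  rw [mem_bP] at hp
  refine posrep_mem (sp_abs_le hu ?_) (sp_abs_le hu ?_) ?_ ?_ ?_
  · rw [abs_le]; omega
  · rw [abs_le]; omega
  · intro h; exact absurd (u.injective h) (by omega)
  · exact sp_ne_zero hu (by omega)
  · exact sp_ne_zero hu (by omega)

lemma ract_posrep {n : ℕ} {v : Equiv.Perm ℤ} (hv : v ∈ SignedPerm n) (a b : ℤ) :
    ract v (posrep (a, b)) = posrep (v a, v b) := by
  by_cases hs : 0 ≤ a + b
  · rw [show posrep (a,b) = (min a b, max a b) from by simp [posrep, hs]]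
    rcases le_total a b with h | h
    · rw [min_eq_left h, max_eq_right h]; rfl
    · rw [min_eq_right h, max_eq_left h]
      show posrep (v b, v a) = _
      exact posrep_swap _ _
  · rw [show posrep (a,b) = (-(max a b), -(min a b)) from by simp [posrep, hs]]
    show posrep (v (-(max a b)), v (-(min a b))) = _
    rw [hv.1, hv.1, posrep_neg]
    rcases le_total a b with h | h
    · rw [max_eq_right h, min_eq_left h]
      exact posrep_swap _ _
    · rw [max_eq_left h, min_eq_right h]

lemma ract_ract_inv {n : ℕ} {u : Equiv.Perm ℤ} (hu : u ∈ SignedPerm n) {p : ℤ × ℤ}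
    (hp : p ∈ bP n) : ract u⁻¹ (ract u p) = p := by
  rw [mem_bP] at hp
  calc ract u⁻¹ (ract u p) = ract u⁻¹ (posrep (u p.1, u p.2)) := rfl
    _ = posrep (u⁻¹ (u p.1), u⁻¹ (u p.2)) := ract_posrep (sp_inv hu) _ _
    _ = posrep (p.1, p.2) := by rw [(show ∀ x : ℤ, u⁻¹ (u x) = x from fun x => Equiv.Perm.inv_eq_iff_eq.mpr rfl), (show ∀ x : ℤ, u⁻¹ (u x) = x from fun x => Equiv.Perm.inv_eq_iff_eq.mpr rfl)]
    _ = p := by rw [posrep_eq_self hp.2.1 hp.2.2.2.1]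

lemma ract_inv_ract {n : ℕ} {u : Equiv.Perm ℤ} (hu : u ∈ SignedPerm n) {p : ℤ × ℤ}
    (hp : p ∈ bP n) : ract u (ract u⁻¹ p) = p := by
  have := ract_ract_inv (sp_inv hu) hp
  rwa [inv_inv] at this

lemma ract_key {n : ℕ} {x u : Equiv.Perm ℤ} (hx : x ∈ SignedPerm n) {p : ℤ × ℤ}
    (hp : p ∈ bP n) :
    ((x * u) p.2 < (x * u) p.1) ↔ ((u p.2 < u p.1) ↔ ¬ (x (ract u p).2 < x (ract u p).1)) := by
  rw [mem_bP] at hp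
  have hne : u p.1 ≠ u p.2 := fun h => absurd (u.injective h) (by omega)
  have hxne : x (u p.1) ≠ x (u p.2) := fun h => hne (x.injective h)
  simp only [Equiv.Perm.mul_apply]
  rcases lt_or_gt_of_ne hne with h | h
  · by_cases hs : 0 ≤ u p.1 + u p.2
    · rw [show ract u p = (u p.1, u p.2) from posrep_eq_self h hs]
      dsimp only
      omega
    · rw [show ract u p = (-(u p.2), -(u p.1)) from by
        show posrep (u p.1, u p.2) = _
        simp only [posrep]
        rw [if_neg hs, max_eq_right h.le, min_eq_left h.le]]
      simp only []
      rw [hx.1, hx.1]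
      omega
  · by_cases hs : 0 ≤ u p.1 + u p.2
    · rw [show ract u p = (u p.2, u p.1) from by
        show posrep (u p.1, u p.2) = _
        rw [posrep_swap (u p.2) (u p.1), posrep_eq_self h (by omega)]]
      dsimp only
      omega
    · rw [show ract u p = (-(u p.1), -(u p.2)) from by
        show posrep (u p.1, u p.2) = _
        simp only [posrep]
        rw [if_neg hs, max_eq_left h.le, min_eq_right h.le]]
      simp only []
      rw [hx.1, hx.1]
      omega

end DCG
namespace DCG

lemma card_bN_mul {n : ℕ} {x u : Equiv.Perm ℤ} (hu : u ∈ SignedPerm n)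
    (hx : x ∈ SignedPerm n) (hsub : bN n u ⊆ bN n (x * u)) :
    (bN n (x * u)).card = (bN n u).card + (bN n x).card := by
  classical
  set T : Finset (ℤ × ℤ) := (bP n).filter (fun p => ract u p ∈ bN n x) with hT
  have hTmem : ∀ p, p ∈ T ↔ p ∈ bP n ∧ ract u p ∈ bN n x := by
    intro p; rw [hT, Finset.mem_filter]
  have hdisj : Disjoint (bN n u) T := by
    rw [Finset.disjoint_left]
    intro p hpu hpT
    rw [hTmem] at hpT
    rw [mem_bN] at hpu
    have hkey := ract_key (u := u) hx hpu.1
    have hB : x (ract u p).2 < x (ract u p).1 := (mem_bN.1 hpT.2).2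
    have hC : (x * u) p.2 < (x * u) p.1 := (mem_bN.1 (hsub (mem_bN.2 hpu))).2
    exact (hkey.1 hC).1 hpu.2 hB
  have hunion : bN n (x * u) = bN n u ∪ T := by
    ext p
    constructor
    · intro hp
      rw [mem_bN] at hp
      have hkey := ract_key (u := u) hx hp.1
      by_cases hA : u p.2 < u p.1
      · exact Finset.mem_union_left _ (mem_bN.2 ⟨hp.1, hA⟩)
      · apply Finset.mem_union_right
        rw [hTmem]
        refine ⟨hp.1, mem_bN.2 ⟨ract_mem hu hp.1, ?_⟩⟩
        by_contra hB
        exact hA ((hkey.1 hp.2).2 hB)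
    · intro hp
      rcases Finset.mem_union.1 hp with hp | hp
      · exact hsub hp
      · rw [hTmem] at hp
        have hkey := ract_key (u := u) hx hp.1
        have hB : x (ract u p).2 < x (ract u p).1 := (mem_bN.1 hp.2).2
        rw [mem_bN]
        refine ⟨hp.1, ?_⟩
        by_cases hA : u p.2 < u p.1
        · exact (mem_bN.1 (hsub (mem_bN.2 ⟨hp.1, hA⟩))).2
        · apply hkey.2
          constructor
          · intro h; exact absurd h hA
          · intro h; exact absurd hB h
    -- done
  have hcardT : T.card = (bN n x).card := by
    apply Finset.card_bij (fun p _ => ract u p)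
    · intro p hp
      exact ((hTmem p).1 hp).2
    · intro p hp q hq hpq
      have hp' := ((hTmem p).1 hp).1
      have hq' := ((hTmem q).1 hq).1
      have := congrArg (ract u⁻¹) hpq
      rwa [ract_ract_inv hu hp', ract_ract_inv hu hq'] at this
    · intro q hq
      have hq' : q ∈ bP n := (mem_bN.1 hq).1
      refine ⟨ract u⁻¹ q, ?_, ract_inv_ract hu hq'⟩
      rw [hTmem]
      refine ⟨ract_mem (sp_inv hu) hq', ?_⟩
      rw [ract_inv_ract hu hq']
      exact hq
  rw [hunion, Finset.card_union_of_disjoint hdisj, hcardT]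

end DCG
namespace DCG

lemma blen_eq_card_bN {n : ℕ} {w : Equiv.Perm ℤ} (hw : w ∈ SignedPerm n) :
    blen n w = (bN n w).card := by
  classical
  have hsplit1 := Finset.card_filter_add_card_filter_not
    (s := bN n w) (p := fun p => 0 < p.1)
  set A := (bN n w).filter (fun p => 0 < p.1) with hA
  set D := (bN n w).filter (fun p => ¬ 0 < p.1) with hD
  have hsplit2 := Finset.card_filter_add_card_filter_not
    (s := D) (p := fun p => p.1 + p.2 = 0)
  set B := D.filter (fun p => p.1 + p.2 = 0) with hB
  set C := D.filter (fun p => ¬ p.1 + p.2 = 0) with hC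
  have hAmem : ∀ p : ℤ × ℤ, p ∈ A ↔ p ∈ bN n w ∧ 0 < p.1 := fun p => Finset.mem_filter
  have hBmem : ∀ p : ℤ × ℤ, p ∈ B ↔ (p ∈ bN n w ∧ ¬ 0 < p.1) ∧ p.1 + p.2 = 0 := by
    intro p
    rw [hB, Finset.mem_filter, hD, Finset.mem_filter]
  have hCmem : ∀ p : ℤ × ℤ, p ∈ C ↔ (p ∈ bN n w ∧ ¬ 0 < p.1) ∧ ¬ p.1 + p.2 = 0 := by
    intro p
    rw [hC, Finset.mem_filter, hD, Finset.mem_filter]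
  have hInv : A = InvSet n w := by
    ext p
    rw [hAmem, mem_bN, mem_bP, InvSet, Finset.mem_filter, Finset.mem_product,
      Finset.mem_Icc, Finset.mem_Icc]
    constructor
    · rintro ⟨⟨h1, h2⟩, h3⟩
      exact ⟨⟨⟨by omega, by omega⟩, by omega, by omega⟩, h1.2.1, h2⟩
    · rintro ⟨⟨⟨h1, h2⟩, h3, h4⟩, h5, h6⟩
      exact ⟨⟨⟨by omega, h5, by omega, by omega, by omega⟩, h6⟩, by omega⟩
  have hNega : B.card = (NegaSet n w).card := by
    symm
    apply Finset.card_bij (fun j _ => ((-j : ℤ), j))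
    · intro j hj
      rw [NegaSet, Finset.mem_filter, Finset.mem_Icc] at hj
      rw [hBmem]
      have hwj : w (-j) = - w j := hw.1 j
      refine ⟨⟨mem_bN.2 ⟨mem_bP.2 ⟨by omega, by omega, by omega, by omega, by omega⟩, ?_⟩,
        by simp only []; omega⟩, by simp only []; omega⟩
      simp only []
      rw [hwj]
      omega
    · intro a _ b _ hab
      have := congrArg Prod.snd hab
      simpa using this
    · intro p hp
      rw [hBmem, mem_bN, mem_bP] at hp
      refine ⟨p.2, ?_, ?_⟩
      · rw [NegaSet, Finset.mem_filter, Finset.mem_Icc]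
        have hwp : w p.1 = - w p.2 := by
          have h1 : p.1 = -p.2 := by omega
          rw [h1, hw.1]
        refine ⟨⟨by omega, by omega⟩, by omega⟩
      · have h1 : p.1 = -p.2 := by omega
        exact Prod.ext (by omega) rfl
  have hNsp : C.card = (NspSet n w).card := by
    symm
    apply Finset.card_bij (fun q _ => ((-q.1 : ℤ), q.2))
    · intro q hq
      rw [NspSet, Finset.mem_filter, Finset.mem_product, Finset.mem_Icc, Finset.mem_Icc] at hq
      obtain ⟨⟨⟨hq1, hq2⟩, hq3, hq4⟩, hq5, hq6⟩ := hq
      rw [hCmem]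
      have hwq : w (-q.1) = - w q.1 := hw.1 q.1
      refine ⟨⟨mem_bN.2 ⟨mem_bP.2 ⟨by omega, by omega, by omega, by omega, by omega⟩, ?_⟩,
        by simp only []; omega⟩, by simp only []; omega⟩
      simp only []
      rw [hwq]
      omega
    · intro a ha b hb hab
      have h1 := congrArg Prod.fst hab
      have h2 := congrArg Prod.snd hab
      simp only [] at h1 h2
      exact Prod.ext (by omega) h2
    · intro p hp
      rw [hCmem, mem_bN, mem_bP] at hp
      obtain ⟨⟨⟨⟨h1, h2, h3, h4, h5⟩, h6⟩, h7⟩, h8⟩ := hp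
      refine ⟨(-p.1, p.2), ?_, ?_⟩
      · rw [NspSet, Finset.mem_filter, Finset.mem_product, Finset.mem_Icc, Finset.mem_Icc]
        have hwp : w p.1 = - w (-p.1) := by
          rw [← hw.1, neg_neg]
        refine ⟨⟨⟨by omega, by omega⟩, by omega, by omega⟩, by simp only []; omega, ?_⟩
        simp only []
        omega
      · exact Prod.ext (by simp only []; omega) rfl
  rw [blen, ← hInv, ← hNega, ← hNsp]
  omega

lemma wle_of_bN_subset {n : ℕ} {u v : Equiv.Perm ℤ} (hu : u ∈ SignedPerm n)
    (hv : v ∈ SignedPerm n) (h : bN n u ⊆ bN n v) : wle n u v := by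
  have hx : v * u⁻¹ ∈ SignedPerm n := sp_mul hv (sp_inv hu)
  have hxu : (v * u⁻¹) * u = v := inv_mul_cancel_right v u
  rw [wle, blen_eq_card_bN hu, blen_eq_card_bN hv, blen_eq_card_bN hx]
  have := card_bN_mul hu hx (by rw [hxu]; exact h)
  rw [hxu] at this
  exact this

end DCG
namespace DCG

lemma w_mono {n : ℕ} {I : Finset ℕ} {w : Equiv.Perm ℤ} (hD : DesSet n w = I) :
    ∀ k : ℕ, ∀ a : ℤ, 0 ≤ a → a + (k:ℤ) ≤ (n:ℤ) →
      (∀ d ∈ I, (d:ℤ) < a ∨ a + (k:ℤ) ≤ (d:ℤ)) → w a ≤ w (a + (k:ℤ)) := by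
  intro k
  induction k with
  | zero => intro a _ _ _; simp
  | succ k ih =>
    intro a ha hn hblock
    have hcast : ((k+1 : ℕ) : ℤ) = (k:ℤ) + 1 := by push_cast; ring
    rw [hcast] at hn hblock ⊢
    have h1 : w a ≤ w (a + (k:ℤ)) := by
      apply ih a ha (by omega)
      intro d hd
      rcases hblock d hd with h | h
      · exact Or.inl h
      · right; omega
    have hstep : ¬ (w (a + (k:ℤ) + 1) < w (a + (k:ℤ))) := by
      intro hlt
      have hmem : (a + (k:ℤ)).toNat ∈ DesSet n w := by
        rw [DesSet, Finset.mem_filter, Finset.mem_range]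
        constructor
        · omega
        · have htn : (((a + (k:ℤ)).toNat : ℕ) : ℤ) = a + (k:ℤ) := by omega
          rw [htn]
          exact hlt
      rw [hD] at hmem
      rcases hblock _ hmem with h | h <;> omega
    have h2 := not_lt.1 hstep
    have h3 : a + ((k:ℤ) + 1) = a + (k:ℤ) + 1 := by ring
    rw [h3]
    exact le_trans h1 h2

lemma w_mono' {n : ℕ} {I : Finset ℕ} {w : Equiv.Perm ℤ} (hD : DesSet n w = I) :
    ∀ a b : ℤ, 0 ≤ a → a ≤ b → b ≤ (n:ℤ) →
      (∀ d ∈ I, (d:ℤ) < a ∨ b ≤ (d:ℤ)) → w a ≤ w b := by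
  intro a b ha hab hb hblock
  have hk : b = a + (((b - a).toNat : ℕ) : ℤ) := by omega
  rw [hk]
  apply w_mono hD _ a ha (by omega)
  intro d hd
  rcases hblock d hd with h | h
  · exact Or.inl h
  · right; omega

lemma w_pos {n : ℕ} {I : Finset ℕ} {w : Equiv.Perm ℤ} (hw : w ∈ SignedPerm n)
    (hD : DesSet n w = I) :
    ∀ k : ℕ, (k:ℤ) ≤ (n:ℤ) → (∀ d ∈ I, k ≤ d) → (k:ℤ) ≤ w (k:ℤ) := by
  intro k
  induction k with
  | zero =>
    intro _ _
    rw [Nat.cast_zero, sp_zero hw]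
  | succ k ih =>
    intro hn hblock
    have hcast : ((k+1 : ℕ) : ℤ) = (k:ℤ) + 1 := by push_cast; ring
    rw [hcast] at hn ⊢
    have h1 : (k:ℤ) ≤ w (k:ℤ) := by
      apply ih (by omega)
      intro d hd
      have := hblock d hd
      omega
    have hknotI : k ∉ I := by
      intro h
      have := hblock k h
      omega
    have hkmem : k ∉ DesSet n w := by rw [hD]; exact hknotI
    rw [DesSet, Finset.mem_filter, Finset.mem_range] at hkmem
    push_neg at hkmem
    have hlt : w ((k:ℤ)+1) ≥ w (k:ℤ) := hkmem (by omega)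
    have hne : w ((k:ℤ)+1) ≠ w (k:ℤ) := by
      intro h
      have := w.injective h
      omega
    omega

end DCG
/-- For `I ⊆ {0,…,n-1}`, the signed permutation `ζ_I` — which is the
identity below the smallest descent position when `0 ∉ I`, and on each block
`(p_r, p_{r+1}]` determined by consecutive elements `p_r < p_{r+1}` of `I ∪ {n}`
(together with `p_0 = 0` when `0 ∈ I`) takes the increasing negative values
`-p_{r+1}, …, -(p_r+1)`, i.e. `ζ_I(a) = -(p_{r+1} + p_r + 1 - a)` — is the largest
element of the descent class `Y_I = {w ∈ 𝔅ₙ : Des(w) = I}` in the weak order.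
(This covers both cases `0 ∈ I` and `0 ∉ I` of the statement uniformly.) -/
theorem descent_class_greatest (n : ℕ) (I : Finset ℕ) (hI : I ⊆ Finset.range n)
    (ζ : Equiv.Perm ℤ) (hζ : ζ ∈ SignedPerm n)
    (hval1 : ∀ a : ℤ, 1 ≤ a → a ≤ (n : ℤ) → (∀ i ∈ I, a ≤ (i : ℤ)) → ζ a = a)
    (hval2 : ∀ a : ℤ, 1 ≤ a → a ≤ (n : ℤ) →
      ∀ lo ∈ I, (lo : ℤ) < a → (∀ i ∈ I, (i : ℤ) < a → i ≤ lo) →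
      ∀ hi ∈ insert n I, a ≤ (hi : ℤ) → (∀ i ∈ insert n I, a ≤ (i : ℤ) → hi ≤ i) →
      ζ a = -(((hi : ℤ) + (lo : ℤ) + 1) - a)) :
    DesSet n ζ = I ∧ ∀ w ∈ SignedPerm n, DesSet n w = I → wle n w ζ := by
  classical
  have hz0 : ζ 0 = 0 := DCG.sp_zero hζ
  -- value of ζ at a non-initial position
  have hzv : ∀ a : ℤ, 1 ≤ a → a ≤ (n:ℤ) → (∃ i ∈ I, (i:ℤ) < a) →
      ∃ lo hi : ℕ, lo ∈ I ∧ hi ∈ insert n I ∧ (lo:ℤ) < a ∧ a ≤ (hi:ℤ) ∧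
        (∀ x ∈ I, (x:ℤ) < a → x ≤ lo) ∧ (∀ x ∈ insert n I, a ≤ (x:ℤ) → hi ≤ x) ∧
        ζ a = a - ((hi:ℤ) + (lo:ℤ) + 1) := by
    intro a h1 h2 hex
    obtain ⟨i0, hi0I, hi0lt⟩ := hex
    have hS : (I.filter (fun i : ℕ => (i:ℤ) < a)).Nonempty :=
      ⟨i0, Finset.mem_filter.2 ⟨hi0I, hi0lt⟩⟩
    set lo := (I.filter (fun i : ℕ => (i:ℤ) < a)).max' hS with hlodef
    have hloS := (I.filter (fun i : ℕ => (i:ℤ) < a)).max'_mem hS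
    rw [Finset.mem_filter] at hloS
    have hlomax : ∀ x ∈ I, (x:ℤ) < a → x ≤ lo := fun x hx hxa =>
      Finset.le_max' _ x (Finset.mem_filter.2 ⟨hx, hxa⟩)
    have hS' : ((insert n I).filter (fun i : ℕ => a ≤ (i:ℤ))).Nonempty :=
      ⟨n, Finset.mem_filter.2 ⟨Finset.mem_insert_self _ _, h2⟩⟩
    set hi := ((insert n I).filter (fun i : ℕ => a ≤ (i:ℤ))).min' hS' with hhidef
    have hhiS := ((insert n I).filter (fun i : ℕ => a ≤ (i:ℤ))).min'_mem hS'
    rw [Finset.mem_filter] at hhiS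
    have hhimin : ∀ x ∈ insert n I, a ≤ (x:ℤ) → hi ≤ x := fun x hx hxa =>
      Finset.min'_le _ x (Finset.mem_filter.2 ⟨hx, hxa⟩)
    refine ⟨lo, hi, hloS.1, hhiS.1, hloS.2, hhiS.2, hlomax, hhimin, ?_⟩
    rw [hval2 a h1 h2 lo hloS.1 hloS.2 hlomax hi hhiS.1 hhiS.2 hhimin]
    ring
  -- dichotomy for the value of ζ
  have hzcase : ∀ a : ℤ, 1 ≤ a → a ≤ (n:ℤ) →
      (ζ a = a ∧ ∀ i ∈ I, a ≤ (i:ℤ)) ∨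
      (∃ lo hi : ℕ, lo ∈ I ∧ hi ∈ insert n I ∧ (lo:ℤ) < a ∧ a ≤ (hi:ℤ) ∧
        (∀ x ∈ I, (x:ℤ) < a → x ≤ lo) ∧ (∀ x ∈ insert n I, a ≤ (x:ℤ) → hi ≤ x) ∧
        ζ a = a - ((hi:ℤ) + (lo:ℤ) + 1)) := by
    intro a h1 h2
    by_cases h : ∀ i ∈ I, a ≤ (i:ℤ)
    · exact Or.inl ⟨hval1 a h1 h2 h, h⟩
    · push_neg at h
      exact Or.inr (hzv a h1 h2 h)
  -- negativity bound for ζ at non-initial positions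
  have hzneg : ∀ b : ℤ, 1 ≤ b → b ≤ (n:ℤ) → (∃ x ∈ I, (x:ℤ) < b) →
      ζ b < 0 ∧ ∀ x ∈ I, (x:ℤ) < b → ζ b ≤ -((x:ℤ)+1) := by
    intro b h1 h2 hex
    obtain ⟨lo, hi, hloI, hhiI, hlolt, hlehi, hlomax, hhimin, hzval⟩ := hzv b h1 h2 hex
    constructor
    · omega
    · intro x hx hxb
      have := hlomax x hx hxb
      omega
  -- descents of ζ
  have hdesc : ∀ i ∈ I, ζ ((i:ℤ)+1) < ζ (i:ℤ) := by
    intro i hiI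
    have hin : i < n := Finset.mem_range.1 (hI hiI)
    obtain ⟨lo, hi, hloI, hhiI, hlolt, hlehi, hlomax, hhimin, hzval⟩ :=
      hzv ((i:ℤ)+1) (by omega) (by omega) ⟨i, hiI, by omega⟩
    have hloi : lo = i := by
      have h1 := hlomax i hiI (by omega)
      omega
    rcases Nat.eq_zero_or_pos i with h0 | hpos
    · subst h0
      rw [Nat.cast_zero] at hzval ⊢
      rw [hz0]
      omega
    · rcases hzcase (i:ℤ) (by omega) (by omega) with ⟨hz1, _⟩ | h
      · omega
      · obtain ⟨lo', hi', hlo'I, hhi'I, hlo'lt, hle'hi, hlo'max, hhi'min, hzval'⟩ := h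
        have hhi'i : hi' ≤ i := hhi'min i (Finset.mem_insert_of_mem hiI) (by omega)
        omega
  have hasc : ∀ i : ℕ, i < n → i ∉ I → ζ (i:ℤ) < ζ ((i:ℤ)+1) := by
    intro i hin hiI
    rcases Nat.eq_zero_or_pos i with h0 | hpos
    · subst h0
      rw [Nat.cast_zero, hz0, zero_add]
      rcases hzcase 1 (le_refl _) (by omega) with ⟨hz1, _⟩ | h
      · omega
      · obtain ⟨lo, hi, hloI, _, hlolt, _, _, _, _⟩ := h
        have : lo = 0 := by omega
        rw [this] at hloI
        exact absurd hloI hiI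
    · rcases hzcase ((i:ℤ)+1) (by omega) (by omega) with ⟨hz1, hinit⟩ | h
      · have hz2 : ζ (i:ℤ) = (i:ℤ) := by
          apply hval1 (i:ℤ) (by omega) (by omega)
          intro x hx
          have := hinit x hx
          omega
        omega
      · obtain ⟨lo, hi, hloI, hhiI, hlolt, hlehi, hlomax, hhimin, hzval⟩ := h
        have hloi : (lo:ℤ) < (i:ℤ) := by
          have : lo ≠ i := fun h => hiI (h ▸ hloI)
          omega
        obtain ⟨lo', hi', hlo'I, hhi'I, hlo'lt, hle'hi, hlo'max, hhi'min, hzval'⟩ :=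
          hzv (i:ℤ) (by omega) (by omega) ⟨lo, hloI, hloi⟩
        have e1 : lo' = lo := by
          have h1 := hlomax lo' hlo'I (by omega)
          have h2 := hlo'max lo hloI hloi
          omega
        have e2 : hi' = hi := by
          have hi'ne : hi' ≠ i := by
            intro h
            rw [h] at hhi'I
            rcases Finset.mem_insert.1 hhi'I with h' | h'
            · omega
            · exact hiI h'
          have h1 := hhimin hi' hhi'I (by omega)
          have h2 := hhi'min hi hhiI (by omega)
          omega
        omega
  have hdes : DesSet n ζ = I := by
    ext i
    rw [DesSet, Finset.mem_filter, Finset.mem_range]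
    constructor
    · rintro ⟨hin, hlt⟩
      by_contra hiI
      exact absurd hlt (not_lt.2 (hasc i hin hiI).le)
    · intro hiI
      exact ⟨Finset.mem_range.1 (hI hiI), hdesc i hiI⟩
  refine ⟨hdes, ?_⟩
  intro w hw hD
  apply DCG.wle_of_bN_subset hw hζ
  intro p hp
  obtain ⟨hpP, hpinv⟩ := DCG.mem_bN.1 hp
  refine DCG.mem_bN.2 ⟨hpP, ?_⟩
  have hP := DCG.mem_bP.1 hpP
  obtain ⟨hb1, hb2, hb3, hb4, hb5⟩ := hP
  have hp2pos : 1 ≤ p.2 := by omega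
  -- auxiliary: if w b < 0 then b has a descent strictly before it
  have hwneg : ∀ b : ℤ, 1 ≤ b → b ≤ (n:ℤ) → w b < 0 → ∃ x ∈ I, (x:ℤ) < b := by
    intro b h1 h2 hneg
    by_contra hc
    push_neg at hc
    have := DCG.w_pos hw hD b.toNat (by omega) (fun d hd => by have := hc d hd; omega)
    have hcast : ((b.toNat : ℕ) : ℤ) = b := by omega
    rw [hcast] at this
    omega
  rcases lt_trichotomy p.1 0 with hneg1 | hzero1 | hpos1
  · by_cases hsum : p.1 + p.2 = 0
    · -- short root case
      have hwp1 : w p.1 = - w p.2 := by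
        rw [show p.1 = -p.2 by omega, hw.1]
      have hwp2 : w p.2 < 0 := by omega
      have hex := hwneg p.2 hp2pos hb3 hwp2
      have hz2 := (hzneg p.2 hp2pos hb3 hex).1
      rw [show p.1 = -p.2 by omega, hζ.1]
      omega
    · -- long root case (negative sum pairs)
      have hk1 : 1 ≤ -p.1 := by omega
      have hk2 : -p.1 < p.2 := by omega
      have hwp1 : w p.1 = - w (-p.1) := by rw [← hw.1, neg_neg]
      have hsumneg : w (-p.1) + w p.2 < 0 := by omega
      have hzp1 : ζ p.1 = - ζ (-p.1) := by rw [← hζ.1, neg_neg]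
      rw [hzp1]
      by_cases hk : ∃ x ∈ I, (x:ℤ) < -p.1
      · have h1 := (hzneg (-p.1) hk1 (by omega) hk).1
        obtain ⟨x, hxI, hxlt⟩ := hk
        have h2 := (hzneg p.2 hp2pos hb3 ⟨x, hxI, by omega⟩).1
        omega
      · push_neg at hk
        have hwkpos : -p.1 ≤ w (-p.1) := by
          have := DCG.w_pos hw hD (-p.1).toNat (by omega)
            (fun d hd => by have := hk d hd; omega)
          have hcast : (((-p.1).toNat : ℕ) : ℤ) = -p.1 := by omega
          rw [hcast] at this
          exact this
        have hwp2neg : w p.2 < 0 := by omega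
        obtain ⟨x, hxI, hxlt⟩ := hwneg p.2 hp2pos hb3 hwp2neg
        have hxk : -p.1 ≤ (x:ℤ) := hk x hxI
        have hz2 := (hzneg p.2 hp2pos hb3 ⟨x, hxI, hxlt⟩).2 x hxI hxlt
        have hzk : ζ (-p.1) = -p.1 := by
          apply hval1 (-p.1) hk1 (by omega)
          intro x' hx'
          exact hk x' hx'
        omega
  · exact absurd hzero1 hb5
  · -- both positions positive: ordinary inversion
    have hdj : ∃ d ∈ I, p.1 ≤ (d:ℤ) ∧ (d:ℤ) < p.2 := by
      by_contra hc
      push_neg at hc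
      have := DCG.w_mono' hD p.1 p.2 (by omega) (by omega) hb3
        (fun d hd => by
          rcases le_or_gt p.1 (d:ℤ) with h | h
          · right; exact hc d hd h
          · exact Or.inl h)
      omega
    obtain ⟨d, hdI, hd1, hd2⟩ := hdj
    obtain ⟨lo, hi, hloI, hhiI, hlolt, hlehi, hlomax, hhimin, hzval⟩ :=
      hzv p.2 hp2pos hb3 ⟨d, hdI, hd2⟩
    have hdlo : d ≤ lo := hlomax d hdI hd2
    rcases hzcase p.1 hpos1 (by omega) with ⟨hz1, _⟩ | h
    · omega
    · obtain ⟨lo', hi', hlo'I, hhi'I, hlo'lt, hle'hi, hlo'max, hhi'min, hzval'⟩ := h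
      have hhi'd : hi' ≤ d := hhi'min d (Finset.mem_insert_of_mem hdI) hd1
      omega
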